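/- Let (X, μ) be a measure space, let T : X → X be a measurable map preserving μ (i.e. μ(T⁻¹(A)) = μ(A) for every measurable set A), and let Θ : X → ℝ be a measurable function such that μ({x : Θ(x) ≤ a₀}) < ∞ for some a₀ > 0 and μ({x : Θ(x) ≤ 0}) = 0. Then the set {x ∈ X : Θ(Tⁿ(x)) → 0 as n → ∞} has μ-measure zero. -/

import Mathlib

open MeasureTheory Filter

/-- If `T` preserves `μ`, the sublevel set `{Θ ≤ a₀}` has finite measure for some `a₀ > 0`
and `{Θ ≤ 0}` is `μ`-null, then the set of points `x` with `Θ(Tⁿ(x)) → 0` is `μ`-null. -/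
theorem tendsto_zero_in_finite_cusp_null {X : Type*} [MeasurableSpace X]
    (μ : Measure X) (T : X → X) (hT : MeasurePreserving T μ μ)
    (Θ : X → ℝ) (hΘ : Measurable Θ)
    (a₀ : ℝ) (ha₀ : 0 < a₀) (hfin : μ {x : X | Θ x ≤ a₀} < ⊤)
    (hnull : μ {x : X | Θ x ≤ 0} = 0) :
    μ {x : X | Tendsto (fun n : ℕ => Θ (T^[n] x)) atTop (nhds 0)} = 0 := by
  set E := {x : X | Tendsto (fun n : ℕ => Θ (T^[n] x)) atTop (nhds 0)} with hE
  -- Step 1: for every 0 < a, μ E ≤ μ {Θ ≤ a}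
  have key : ∀ a : ℝ, 0 < a → μ E ≤ μ {x : X | Θ x ≤ a} := by
    intro a ha
    set A := {x : X | Θ x ≤ a} with hA
    have hAm : MeasurableSet A := hΘ measurableSet_Iic
    set B := ⋂ n : ℕ, (T^[n]) ⁻¹' A with hB
    have hBm : MeasurableSet B :=
      MeasurableSet.iInter fun n => hAm.preimage (hT.iterate n).measurable
    have hGN : ∀ N : ℕ, (⋂ n : ℕ, (T^[N + n]) ⁻¹' A) = (T^[N]) ⁻¹' B := by
      intro N
      simp only [hB, Set.preimage_iInter]
      refine Set.iInter_congr fun n => ?_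
      rw [add_comm N n, Function.iterate_add, Set.preimage_comp]
    have hEsub : E ⊆ ⋃ N : ℕ, (T^[N]) ⁻¹' B := by
      intro x hx
      have : ∀ᶠ n : ℕ in atTop, Θ (T^[n] x) < a := hx.eventually_lt_const ha
      obtain ⟨N, hN⟩ := eventually_atTop.1 this
      refine Set.mem_iUnion.2 ⟨N, ?_⟩
      rw [← hGN N]
      refine Set.mem_iInter.2 fun n => ?_
      exact le_of_lt (hN (N + n) (Nat.le_add_right N n))
    refine le_trans (measure_mono hEsub) ?_
    have hmono : Monotone fun N : ℕ => (T^[N]) ⁻¹' B := by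
      intro m n hmn
      simp only
      rw [← hGN m, ← hGN n]
      intro x hx
      refine Set.mem_iInter.2 fun k => ?_
      have := Set.mem_iInter.1 hx (n - m + k)
      rwa [show m + (n - m + k) = n + k by omega] at this
    have hdir : Directed (· ⊆ ·) fun N : ℕ => (T^[N]) ⁻¹' B :=
      hmono.directed_le
    rw [hdir.measure_iUnion]
    refine iSup_le fun N => ?_
    rw [(hT.iterate N).measure_preimage hBm.nullMeasurableSet]
    exact measure_mono (by simpa using Set.iInter_subset (fun n : ℕ => (T^[n]) ⁻¹' A) 0)
  -- Step 2: let a → 0 along a₀ / (n+1)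
  set S : ℕ → Set X := fun n => {x : X | Θ x ≤ a₀ / (n + 1)} with hS
  have hSm : ∀ n, NullMeasurableSet (S n) μ := fun n =>
    (hΘ measurableSet_Iic).nullMeasurableSet
  have hanti : Antitone S := by
    intro m n hmn x hx
    simp only [hS, Set.mem_setOf_eq] at hx ⊢
    refine le_trans hx ?_
    have h1 : (m : ℝ) + 1 ≤ (n : ℝ) + 1 := by exact_mod_cast Nat.succ_le_succ hmn
    gcongr
  have hfin' : ∃ n, μ (S n) ≠ ⊤ := by
    refine ⟨0, ne_top_of_le_ne_top hfin.ne (measure_mono fun x hx => ?_)⟩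
    simp only [hS, Set.mem_setOf_eq] at hx ⊢
    refine le_trans hx ?_
    norm_num
  have hiInter : (⋂ n, S n) = {x : X | Θ x ≤ 0} := by
    ext x
    simp only [Set.mem_iInter, hS, Set.mem_setOf_eq]
    constructor
    · intro h
      by_contra hpos
      push_neg at hpos
      obtain ⟨n, hn⟩ := exists_nat_gt (a₀ / Θ x)
      have hn' : a₀ / (n + 1) < Θ x := by
        rw [div_lt_iff₀ (by positivity)]
        calc a₀ = (a₀ / Θ x) * Θ x := by field_simp
        _ < (n : ℝ) * Θ x := by gcongr
        _ ≤ ((n : ℝ) + 1) * Θ x := by nlinarith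
        _ = Θ x * ((n : ℝ) + 1) := by ring
      exact absurd (h n) (not_le.2 hn')
    · intro h n
      exact le_trans h (by positivity)
  have htend : Tendsto (μ ∘ S) atTop (nhds (μ {x : X | Θ x ≤ 0})) := by
    rw [← hiInter]
    exact tendsto_measure_iInter_atTop hSm hanti hfin'
  rw [hnull] at htend
  have hle : μ E ≤ 0 := ge_of_tendsto' htend fun n => key _ (by positivity)
  exact le_antisymm hle zero_le
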